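/- With the simple belief function, the user utility U(c) = (v - c)·log₂(q·K·c/(c+C)) is strictly concave on the interval where log₂(q·K·c/(c+C)) > 0 and c < v; consequently the first-order condition dU/dc = 0 has at most one solution in that interval. -/

import Mathlib

open Real Set Filter

/-- With the simple belief, the utility `U(c) = (v - c) * log₂(q*K*c/(c+C))`
is strictly concave on the interval `I = {c ∈ (0,v) | q*K*c/(c+C) > 1}` (where the believed
throughput is positive and `c < v`); consequently the first-order condition `U'(c) = 0`
has at most one solution in `I`. -/
theorem utility_strictly_concave (v q C K : ℝ) (hv : 0 < v) (hq : 0 < q) (hC : 0 < C)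
    (hK : 0 < K) (hqK : 1 < q * K) :
    StrictConcaveOn ℝ {c : ℝ | 0 < c ∧ c < v ∧ 1 < q * K * c / (c + C)}
      (fun c => (v - c) * Real.logb 2 (q * K * c / (c + C))) ∧
    ∀ c₁ ∈ {c : ℝ | 0 < c ∧ c < v ∧ 1 < q * K * c / (c + C)},
      ∀ c₂ ∈ {c : ℝ | 0 < c ∧ c < v ∧ 1 < q * K * c / (c + C)},
        deriv (fun c => (v - c) * Real.logb 2 (q * K * c / (c + C))) c₁ = 0 →
        deriv (fun c => (v - c) * Real.logb 2 (q * K * c / (c + C))) c₂ = 0 →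
        c₁ = c₂ := by
  have hlog2 : (0:ℝ) < Real.log 2 := Real.log_pos (by norm_num)
  set U : ℝ → ℝ := fun c => (v - c) * Real.logb 2 (q * K * c / (c + C)) with hUdef
  set U1 : ℝ → ℝ := fun c =>
    -Real.logb 2 (q * K * c / (c + C)) + (v - c) * (C / (c * (c + C) * Real.log 2)) with hU1def
  set U2 : ℝ → ℝ := fun c =>
    -(2 * C / (c * (c + C) * Real.log 2))
      - (v - c) * C * (2 * c + C) / ((c * (c + C)) ^ 2 * Real.log 2) with hU2def
  set a : ℝ := C / (q * K - 1) with ha_def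
  have hqK1 : (0:ℝ) < q * K - 1 := by linarith
  have ha : 0 < a := div_pos hC hqK1
  -- the set is the open interval (a, v)
  have hset : {c : ℝ | 0 < c ∧ c < v ∧ 1 < q * K * c / (c + C)} = Set.Ioo a v := by
    ext c
    simp only [Set.mem_setOf_eq, Set.mem_Ioo]
    constructor
    · rintro ⟨hc, hcv, hr⟩
      have hcC : (0:ℝ) < c + C := by linarith
      rw [lt_div_iff₀ hcC] at hr
      refine ⟨?_, hcv⟩
      rw [ha_def, div_lt_iff₀ hqK1]
      nlinarith
    · rintro ⟨h1, h2⟩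
      have hc : 0 < c := lt_trans ha h1
      have hcC : (0:ℝ) < c + C := by linarith
      rw [ha_def, div_lt_iff₀ hqK1] at h1
      exact ⟨hc, h2, by rw [lt_div_iff₀ hcC]; nlinarith⟩
  -- derivative of the inner rational function
  have hg : ∀ c : ℝ, 0 < c →
      HasDerivAt (fun x => q * K * x / (x + C))
        ((q * K * (c + C) - q * K * c * 1) / (c + C) ^ 2) c := by
    intro c hc
    have h1 : HasDerivAt (fun x : ℝ => q * K * x) (q * K) c := by
      simpa using (hasDerivAt_id c).const_mul (q * K)
    have h2 : HasDerivAt (fun x : ℝ => x + C) 1 c := (hasDerivAt_id c).add_const C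
    exact h1.div h2 (by positivity)
  -- derivative of the logb part
  have hL : ∀ c : ℝ, 0 < c →
      HasDerivAt (fun x => Real.logb 2 (q * K * x / (x + C)))
        (C / (c * (c + C) * Real.log 2)) c := by
    intro c hc
    have hcC : (0:ℝ) < c + C := by linarith
    have hgpos : 0 < q * K * c / (c + C) := by positivity
    have h := ((hg c hc).log (ne_of_gt hgpos)).div_const (Real.log 2)
    have heq : (fun x => Real.log (q * K * x / (x + C)) / Real.log 2)
        = fun x => Real.logb 2 (q * K * x / (x + C)) := by
      funext x; rw [Real.logb]
    rw [heq] at h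
    refine h.congr_deriv ?_
    field_simp
    ring
  -- first derivative of U
  have hU' : ∀ c : ℝ, 0 < c → HasDerivAt U (U1 c) c := by
    intro c hc
    have h := ((hasDerivAt_id c).const_sub v).mul (hL c hc)
    simpa [hUdef, hU1def, neg_one_mul, Pi.mul_def] using h
  -- derivative of U1
  have hU1' : ∀ c : ℝ, 0 < c ∧ c < v → HasDerivAt U1 (U2 c) c := by
    rintro c ⟨hc, _⟩
    have hcC : (0:ℝ) < c + C := by linarith
    have hA : HasDerivAt (fun x => -Real.logb 2 (q * K * x / (x + C)))
        (-(C / (c * (c + C) * Real.log 2))) c := (hL c hc).neg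
    have hden : HasDerivAt (fun x : ℝ => x * (x + C) * Real.log 2)
        ((1 * (c + C) + c * 1) * Real.log 2) c :=
      ((hasDerivAt_id c).mul ((hasDerivAt_id c).add_const C)).mul_const _
    have hB : HasDerivAt (fun x : ℝ => C / (x * (x + C) * Real.log 2))
        ((0 * (c * (c + C) * Real.log 2) - C * ((1 * (c + C) + c * 1) * Real.log 2))
          / (c * (c + C) * Real.log 2) ^ 2) c :=
      (hasDerivAt_const c C).div hden (by positivity)
    have h := hA.add (((hasDerivAt_id c).const_sub v).mul hB)
    refine (h.congr_deriv ?_ : HasDerivAt _ _ c)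
    rw [hU2def]
    simp only [id]
    field_simp
    ring
  -- U2 is negative on the interval
  have hU2neg : ∀ c : ℝ, 0 < c → c < v → U2 c < 0 := by
    intro c hc hcv
    have hcC : (0:ℝ) < c + C := by linarith
    have hvc : (0:ℝ) < v - c := by linarith
    have t1 : 0 < 2 * C / (c * (c + C) * Real.log 2) := by positivity
    have t2 : 0 < (v - c) * C * (2 * c + C) / ((c * (c + C)) ^ 2 * Real.log 2) := by positivity
    rw [hU2def]
    dsimp only
    linarith
  -- second derivative of U
  have hderiv1 : ∀ c : ℝ, 0 < c → deriv U c = U1 c := fun c hc => (hU' c hc).deriv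
  have hderiv2 : ∀ c : ℝ, 0 < c ∧ c < v → deriv (deriv U) c = U2 c := by
    rintro c ⟨hc, hcv⟩
    have h1 : deriv U =ᶠ[nhds c] U1 := by
      filter_upwards [Ioi_mem_nhds hc] with x hx
      exact hderiv1 x hx
    rw [h1.deriv_eq]
    exact (hU1' c ⟨hc, hcv⟩).deriv
  rw [hset]
  have hmem : ∀ x ∈ Set.Ioo a v, 0 < x ∧ x < v := fun x hx => ⟨lt_trans ha hx.1, hx.2⟩
  have hcontU : ContinuousOn U (Set.Ioo a v) := fun x hx =>
    ((hU' x (hmem x hx).1).continuousAt).continuousWithinAt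
  constructor
  · apply strictConcaveOn_of_deriv2_neg (convex_Ioo a v) hcontU
    intro x hx
    rw [interior_Ioo] at hx
    have : deriv^[2] U x = deriv (deriv U) x := rfl
    rw [this, hderiv2 x (hmem x hx)]
    exact hU2neg x (hmem x hx).1 (hmem x hx).2
  · -- uniqueness of critical points via strict antitonicity of deriv U
    have hanti : StrictAntiOn (deriv U) (Set.Ioo a v) := by
      apply strictAntiOn_of_deriv_neg (convex_Ioo a v)
      · apply ContinuousOn.congr (f := U1)
        · intro x hx
          exact ((hU1' x (hmem x hx)).continuousAt).continuousWithinAt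
        · intro x hx
          exact hderiv1 x (hmem x hx).1
      · intro x hx
        rw [interior_Ioo] at hx
        rw [hderiv2 x (hmem x hx)]
        exact hU2neg x (hmem x hx).1 (hmem x hx).2
    intro c₁ hc₁ c₂ hc₂ h1 h2
    by_contra hne
    rcases lt_or_gt_of_ne hne with h | h
    · have := hanti hc₁ hc₂ h
      rw [h1, h2] at this
      exact lt_irrefl _ this
    · have := hanti hc₂ hc₁ h
      rw [h1, h2] at this
      exact lt_irrefl _ this
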